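/- For q = exp(iπ/p), the left adjoint action of F(r) on the vector V^j_{s,0} in the Yetter–Drinfeld module V^j is F(r) ▷ V^j_{s,0} = [r+s choose r]_{q²} · ∏_{a=s}^{s+r-1}(1 - q^{2a-2j}) · V^j_{r+s,0}. -/

import Mathlib

/-- `q = exp(iπ/p)`. -/
noncomputable def qRoot (p : ℕ) : ℂ := Complex.exp (Real.pi * Complex.I / p)

/-- The q-integer `[n] = (q^{2n} - 1)/(q² - 1)`. -/
noncomputable def brQ (p : ℕ) (n : ℕ) : ℂ :=
  ((qRoot p) ^ (2 * n) - 1) / ((qRoot p) ^ 2 - 1)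

/-- The q-factorial `[r]! = [1][2]⋯[r]`. -/
noncomputable def qfact (p : ℕ) : ℕ → ℂ
  | 0 => 1
  | n + 1 => qfact p n * brQ p (n + 1)

lemma qRoot_ne_zero (p : ℕ) : qRoot p ≠ 0 := Complex.exp_ne_zero _

lemma qRoot_sq (p : ℕ) : qRoot p ^ 2 = Complex.exp (2 * Real.pi * Complex.I / p) := by
  rw [qRoot, ← Complex.exp_nat_mul]
  ring_nf

lemma qRoot_sq_ne_one (p : ℕ) (hp : 2 ≤ p) : qRoot p ^ 2 ≠ 1 := by
  rw [qRoot_sq]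
  intro h
  rw [Complex.exp_eq_one_iff] at h
  obtain ⟨n, hn⟩ := h
  have hp0 : (p : ℂ) ≠ 0 := by
    simp only [ne_eq, Nat.cast_eq_zero]; omega
  have h2 : 2 * (Real.pi : ℂ) * Complex.I = n * (2 * Real.pi * Complex.I) * p := by
    field_simp at hn
    linear_combination (2 * (Real.pi : ℂ) * Complex.I) * hn
  have hpi : (2 * (Real.pi : ℂ) * Complex.I) ≠ 0 := by
    simp [Real.pi_ne_zero, Complex.I_ne_zero]
  have h3 : (1 : ℂ) = (n : ℂ) * p := by
    have := mul_left_cancel₀ hpi (show 2 * (Real.pi:ℂ) * Complex.I * 1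
      = 2 * (Real.pi:ℂ) * Complex.I * ((n:ℂ) * p) by linear_combination h2)
    exact this
  have h4 : (1 : ℤ) = n * p := by exact_mod_cast h3
  have hdvd : (p : ℤ) ∣ 1 := ⟨n, by linarith [h4]⟩
  have := Int.le_of_dvd one_pos hdvd
  omega

lemma brQ_mul (p : ℕ) (hp : 2 ≤ p) (m : ℕ) : (qRoot p ^ 2 - 1) * brQ p m = (qRoot p ^ 2) ^ m - 1 := by
  have hc : qRoot p ^ 2 - 1 ≠ 0 := sub_ne_zero.mpr (qRoot_sq_ne_one p hp)
  rw [brQ, ← pow_mul]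
  field_simp


/-- The Gaussian binomial coefficient `[n choose k]_t` via the q-Pascal recursion. -/
def qChoose {R : Type*} [CommRing R] (q : R) : ℕ → ℕ → R
  | _, 0 => 1
  | 0, _ + 1 => 0
  | n + 1, k + 1 => qChoose q n k + q ^ (k + 1) * qChoose q n (k + 1)

lemma qChoose_zero_right {R : Type*} [CommRing R] (q : R) (n : ℕ) : qChoose q n 0 = 1 := by
  cases n <;> rfl

lemma qChoose_succ_succ {R : Type*} [CommRing R] (q : R) (n k : ℕ) :
    qChoose q (n+1) (k+1) = qChoose q n k + q ^ (k + 1) * qChoose q n (k + 1) := rfl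

lemma qChoose_eq_zero {R : Type*} [CommRing R] (q : R) : ∀ {n k : ℕ}, n < k → qChoose q n k = 0 := by
  intro n
  induction n with
  | zero => intro k hk; match k, hk with | k+1, _ => rfl
  | succ n ih =>
    intro k hk
    match k, hk with
    | k+1, hk =>
      rw [qChoose_succ_succ, ih (by omega), ih (by omega)]; ring

lemma qChoose_self {R : Type*} [CommRing R] (q : R) : ∀ n, qChoose q n n = 1 := by
  intro n
  induction n with
  | zero => rfl
  | succ n ih => rw [qChoose_succ_succ, ih, qChoose_eq_zero q (by omega)]; ring

lemma qChoose_map {R S : Type*} [CommRing R] [CommRing S] (f : R →+* S) (q : R) :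
    ∀ n k, f (qChoose q n k) = qChoose (f q) n k := by
  intro n
  induction n with
  | zero => intro k; cases k <;> simp [qChoose]
  | succ n ih =>
    intro k
    cases k with
    | zero => simp [qChoose]
    | succ k => simp [qChoose, ih]

noncomputable def bfact (n : ℕ) : Polynomial ℂ :=
  ∏ i ∈ Finset.range n, (Polynomial.X ^ (i + 1) - 1)

lemma bfact_ne_zero (n : ℕ) : bfact n ≠ 0 := by
  apply Finset.prod_ne_zero_iff.mpr
  intro i _ h
  have := congrArg (Polynomial.eval 0) h
  simp at this

lemma key_poly : ∀ n k, k ≤ n →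
    bfact k * bfact (n - k) * qChoose Polynomial.X n k = bfact n := by
  intro n
  induction n with
  | zero => intro k hk; interval_cases k; simp [bfact, qChoose_zero_right]
  | succ n ih =>
    intro k hk
    cases k with
    | zero => simp [bfact, qChoose_zero_right]
    | succ k =>
      rw [qChoose_succ_succ, show n + 1 - (k+1) = n - k from by omega]
      have hk' : k ≤ n := by omega
      rcases Nat.lt_or_ge k n with h | h
      · have h1 : bfact (k+1) = bfact k * (Polynomial.X ^ (k+1) - 1) := by
          simp [bfact, Finset.prod_range_succ]
        have h2 : bfact (n - k) = bfact (n - (k+1)) * (Polynomial.X ^ (n - k) - 1) := by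
          have hnk : n - k = (n - (k+1)) + 1 := by omega
          rw [hnk, bfact, bfact, Finset.prod_range_succ]
        have e1 := ih k hk'
        have e2 := ih (k+1) h
        have h3 : bfact (n+1) = bfact n * (Polynomial.X ^ (n+1) - 1) := by
          simp [bfact, Finset.prod_range_succ]
        have hx : (Polynomial.X : Polynomial ℂ) ^ (k+1) * Polynomial.X ^ (n-k) = Polynomial.X ^ (n+1) := by
          rw [← pow_add]; congr 1; omega
        have expand : bfact (k+1) * bfact (n - k) * (qChoose Polynomial.X n k + Polynomial.X ^ (k + 1) * qChoose Polynomial.X n (k + 1))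
            = (Polynomial.X ^ (k+1) - 1) * (bfact k * bfact (n-k) * qChoose Polynomial.X n k)
              + Polynomial.X ^ (k+1) * (Polynomial.X ^ (n-k) - 1) * (bfact (k+1) * bfact (n - (k+1)) * qChoose Polynomial.X n (k+1)) := by
          rw [h1, h2]; ring
        rw [expand, e1, e2, h3]
        linear_combination (bfact n) * hx
      · have hkn : k = n := by omega
        subst hkn
        rw [qChoose_eq_zero (Polynomial.X) (show k < k+1 by omega), qChoose_self]
        simp [Nat.sub_self, bfact, Finset.prod_range_succ]

lemma key_poly2 (r s : ℕ) :
    bfact r * qChoose Polynomial.X (r + s) r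
      = ∏ a ∈ Finset.Ico s (s + r), ((Polynomial.X : Polynomial ℂ) ^ (a + 1) - 1) := by
  apply mul_left_cancel₀ (bfact_ne_zero s)
  have h1 : bfact s * (bfact r * qChoose Polynomial.X (r + s) r) = bfact (r + s) := by
    have := key_poly (r + s) r (by omega)
    rw [show r + s - r = s from by omega] at this
    linear_combination this
  rw [h1]
  rw [Finset.prod_Ico_eq_prod_range, show s + r - s = r from by omega]
  rw [bfact, show r + s = s + r from by omega, Finset.prod_range_add, bfact]

lemma key_c (p : ℕ) (hp : 2 ≤ p) (r s : ℕ) :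
    qfact p r * qChoose ((qRoot p) ^ 2) (r + s) r
      = ∏ a ∈ Finset.Ico s (s + r), brQ p (a + 1) := by
  set q2 : ℂ := qRoot p ^ 2 with hq2
  have hc : q2 - 1 ≠ 0 := sub_ne_zero.mpr (qRoot_sq_ne_one p hp)
  have hb : ∀ n, Polynomial.eval q2 (bfact n) = (q2 - 1) ^ n * qfact p n := by
    intro n
    induction n with
    | zero => simp [bfact, qfact]
    | succ n ih =>
      rw [bfact, Finset.prod_range_succ, ← bfact, Polynomial.eval_mul, ih]
      have := brQ_mul p hp (n + 1)
      simp only [Polynomial.eval_sub, Polynomial.eval_pow, Polynomial.eval_X, Polynomial.eval_one]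
      rw [show qfact p (n + 1) = qfact p n * brQ p (n + 1) from rfl]
      linear_combination (-((q2 - 1) ^ n * qfact p n)) * this
  have hmap : Polynomial.eval q2 (qChoose Polynomial.X (r + s) r) = qChoose q2 (r + s) r := by
    have := qChoose_map (Polynomial.evalRingHom q2) Polynomial.X (r + s) r
    simpa using this
  have := congrArg (Polynomial.eval q2) (key_poly2 r s)
  rw [Polynomial.eval_mul, hb, hmap, Polynomial.eval_prod] at this
  simp only [Polynomial.eval_sub, Polynomial.eval_pow, Polynomial.eval_X, Polynomial.eval_one] at this
  have hrhs : ∏ a ∈ Finset.Ico s (s + r), (q2 ^ (a + 1) - 1)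
      = (q2 - 1) ^ r * ∏ a ∈ Finset.Ico s (s + r), brQ p (a + 1) := by
    rw [show ∏ a ∈ Finset.Ico s (s + r), (q2 ^ (a + 1) - 1)
        = ∏ a ∈ Finset.Ico s (s + r), ((q2 - 1) * brQ p (a + 1)) from
      Finset.prod_congr rfl fun a _ => (brQ_mul p hp (a + 1)).symm]
    rw [Finset.prod_mul_distrib, Finset.prod_const, Nat.card_Ico,
      show s + r - s = r from by omega]
  apply mul_left_cancel₀ (pow_ne_zero r hc)
  rw [← mul_assoc, this, hrhs]


/- The Hopf bimodule `⊕ (s;Y;t)` is modelled as the space with basis `V^j_{s,t}`,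
`(s,t) ∈ ℕ × ℕ`, i.e. `(ℕ × ℕ) →₀ ℂ`.  The left action of `F` is
`F·V^j_{s,t} = [s+1]V^j_{s+1,t} + q^{2s-j}[t+1]V^j_{s,t+1}`, the right action is
`V^j_{s,t}·F = q^{2t-j}[s+1]V^j_{s+1,t} + [t+1]V^j_{s,t+1}`, and the left adjoint action
of `F` is `F ▷ v = F·v - q^{2(s+t)-j} (v·F)` (the braiding factor for `F` travelling past
`V^j_{s,t}` being `q^{2(s+t)-j}`). -/

/-- The left adjoint action of `F` on the Hopf bimodule with basis `V^j_{s,t}`. -/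
noncomputable def adF (p : ℕ) (j : ℤ) : Module.End ℂ ((ℕ × ℕ) →₀ ℂ) :=
  Finsupp.lsum ℂ fun st =>
    LinearMap.toSpanSingleton ℂ _
      ((brQ p (st.1 + 1) • Finsupp.single (st.1 + 1, st.2) (1 : ℂ)
          + ((qRoot p) ^ (2 * (st.1 : ℤ) - j) * brQ p (st.2 + 1)) •
              Finsupp.single (st.1, st.2 + 1) (1 : ℂ))
        - (qRoot p) ^ (2 * ((st.1 : ℤ) + (st.2 : ℤ)) - j) •
            (((qRoot p) ^ (2 * (st.2 : ℤ) - j) * brQ p (st.1 + 1)) •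
                Finsupp.single (st.1 + 1, st.2) (1 : ℂ)
              + brQ p (st.2 + 1) • Finsupp.single (st.1, st.2 + 1) (1 : ℂ)))

lemma adF_single (p : ℕ) (j : ℤ) (s : ℕ) :
    adF p j (Finsupp.single (s, 0) (1 : ℂ))
      = (brQ p (s + 1) * (1 - qRoot p ^ (2 * (s : ℤ) - 2 * j)))
          • Finsupp.single (s + 1, 0) (1 : ℂ) := by
  have hq := qRoot_ne_zero p
  rw [adF, Finsupp.lsum_single, LinearMap.toSpanSingleton_apply, one_smul]
  simp only [Nat.cast_zero, add_zero, mul_zero, zero_sub]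
  have h1 : qRoot p ^ (2 * (s : ℤ) - j) * (qRoot p ^ (-j) * brQ p (s + 1))
      = (brQ p (s + 1) * qRoot p ^ (2 * (s : ℤ) - 2 * j)) := by
    rw [← mul_assoc, ← zpow_add₀ hq, show 2 * (s : ℤ) - j + -j = 2 * (s:ℤ) - 2 * j by ring]
    ring
  rw [smul_add, smul_smul, smul_smul, h1]
  module

lemma adF_pow (p : ℕ) (j : ℤ) : ∀ (r s : ℕ),
    (adF p j ^ r) (Finsupp.single (s, 0) (1 : ℂ))
      = (∏ a ∈ Finset.Ico s (s + r),
            (brQ p (a + 1) * (1 - qRoot p ^ (2 * (a : ℤ) - 2 * j))))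
          • Finsupp.single (r + s, 0) (1 : ℂ) := by
  intro r
  induction r with
  | zero => intro s; simp
  | succ r ih =>
    intro s
    rw [pow_succ, Module.End.mul_apply, adF_single, map_smul, ih (s + 1), smul_smul]
    rw [Finset.prod_eq_prod_Ico_succ_bot (by omega : s < s + (r + 1))]
    rw [show s + (r + 1) = s + 1 + r from by omega, show r + 1 + s = r + (s + 1) from by omega]


/-- the closed formula for the left adjoint action of the divided power
`F(r) = F^r/[r]!` on `V^j_{s,0}`:
`F(r) ▷ V^j_{s,0} = [r+s choose r]_{q²} ∏_{a=s}^{s+r-1} (1 - q^{2a-2j}) V^j_{r+s,0}`,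
stated equivalently (after multiplying both sides by `[r]!`, since `F^r = [r]!·F(r)`) as
a formula for the `r`-fold iterated adjoint action of `F`. -/
theorem adjoint_action_closed_formula (p : ℕ) (hp : 2 ≤ p) (j : ℤ) (r s : ℕ) :
    (adF p j ^ r) (Finsupp.single (s, 0) (1 : ℂ))
      = (qfact p r * qChoose ((qRoot p) ^ 2) (r + s) r
            * ∏ a ∈ Finset.Ico s (s + r), (1 - (qRoot p) ^ (2 * (a : ℤ) - 2 * j)))
          • Finsupp.single (r + s, 0) (1 : ℂ) := by
  rw [adF_pow, Finset.prod_mul_distrib, ← key_c p hp r s]
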